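/- The double integral over (0,1]² of min((1−a)/b, (1−b)/a) da db equals 2 log 2. -/

import Mathlib

open MeasureTheory intervalIntegral Real Set
open scoped Interval

lemma log_intInt : IntervalIntegrable Real.log volume 0 1 := by
  have h : IntegrableOn (fun x => -Real.log x) (Set.Ioc (0:ℝ) 1) volume := by
    apply integrableOn_deriv_of_nonneg (g := fun x => x - x * Real.log x)
    · exact (continuous_id.sub Real.continuous_mul_log).continuousOn
    · intro x hx
      have h1 := (hasDerivAt_id x).sub (Real.hasDerivAt_mul_log (ne_of_gt hx.1))
      rw [show -Real.log x = 1 - (Real.log x + 1) by ring]; exact h1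
    · intro x hx
      simpa using Real.log_nonpos hx.1.le hx.2.le
  rw [intervalIntegrable_iff_integrableOn_Ioc_of_le zero_le_one]
  have h2 : IntegrableOn (fun x => -(-Real.log x)) (Set.Ioc (0:ℝ) 1) volume := h.neg
  exact h2.congr_fun (fun x _ => by simp) measurableSet_Ioc

lemma integral_log01 {u v : ℝ} (h0 : 0 ≤ u) (huv : u ≤ v) (hv1 : v ≤ 1) :
    ∫ x in u..v, Real.log x = (v * Real.log v - v) - (u * Real.log u - u) := by
  apply intervalIntegral.integral_eq_sub_of_hasDeriv_right_of_le huv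
    (f := fun x => x * Real.log x - x)
  · exact (Real.continuous_mul_log.sub continuous_id).continuousOn
  · intro x hx
    have hx0 : x ≠ 0 := ne_of_gt (lt_of_le_of_lt h0 hx.1)
    have h1 := (Real.hasDerivAt_mul_log hx0).sub (hasDerivAt_id x)
    have h2 : Real.log x = Real.log x + 1 - 1 := by ring
    rw [h2]
    exact h1.hasDerivWithinAt
  · exact log_intInt.mono_set (by
      rw [Set.uIcc_of_le huv, Set.uIcc_of_le zero_le_one]
      exact Set.Icc_subset_Icc h0 hv1)

lemma integral_mul_log01 {u v : ℝ} (h0 : 0 ≤ u) (huv : u ≤ v) :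
    ∫ x in u..v, x * Real.log x
      = (v^2 * Real.log v / 2 - v^2/4) - (u^2 * Real.log u / 2 - u^2/4) := by
  have key : ∫ x in u..v, x * Real.log x
      = (fun x => x * (x * Real.log x) / 2 - x^2/4) v
        - (fun x => x * (x * Real.log x) / 2 - x^2/4) u := by
    apply intervalIntegral.integral_eq_sub_of_hasDeriv_right_of_le huv
    · exact (((continuous_id.mul Real.continuous_mul_log).div_const 2).sub
        ((continuous_pow 2).div_const 4)).continuousOn
    · intro x hx
      have hx0 : x ≠ 0 := ne_of_gt (lt_of_le_of_lt h0 hx.1)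
      have hd : HasDerivAt (fun y => y * (y * Real.log y) / 2 - y^2/4) (x * Real.log x) x := by
        have h1 := (((hasDerivAt_id x).mul (Real.hasDerivAt_mul_log hx0)).div_const 2).sub
          ((hasDerivAt_pow 2 x).div_const 4)
        rw [show x * Real.log x = (1 * (x * Real.log x) + id x * (Real.log x + 1)) / 2
            - ((2:ℕ):ℝ) * x ^ (2 - 1) / 4 by
          simp only [id_eq, pow_one, Nat.cast_ofNat]
          ring]
        exact h1
      exact hd.hasDerivWithinAt
    · exact Real.continuous_mul_log.intervalIntegrable u v
  rw [key]; ring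

noncomputable def gfun (a : ℝ) : ℝ :=
  if a ≤ 1/2 then 1 + (1-a)*(Real.log (1-a) - Real.log a)
  else (1-a)/a + (1-a)*(Real.log a - Real.log (1-a))

lemma piece1 {u v a : ℝ} (huv : u ≤ v) (ha : a ≠ 0) :
    ∫ b in Set.Ioc u v, (1-b)/a = ((v - v^2/2) - (u - u^2/2))/a := by
  rw [← intervalIntegral.integral_of_le huv]
  have : ∀ b : ℝ, (1-b)/a = (1-b) * a⁻¹ := fun b => by rw [div_eq_mul_inv]
  simp_rw [this]
  rw [intervalIntegral.integral_mul_const, integral_sub intervalIntegrable_const intervalIntegrable_id,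
    integral_one, integral_id]
  field_simp
  ring

lemma piece2 {u v c : ℝ} (hu : 0 < u) (huv : u ≤ v) :
    ∫ b in Set.Ioc u v, c/b = c * (Real.log v - Real.log u) := by
  have hv : 0 < v := lt_of_lt_of_le hu huv
  have h0 : (0:ℝ) ∉ Set.uIcc u v := by
    rw [Set.uIcc_of_le huv]
    intro h
    exact absurd (Set.mem_Icc.mp h).1 (not_le.2 hu)
  rw [← intervalIntegral.integral_of_le huv]
  have : ∀ b : ℝ, c/b = c * b⁻¹ := fun b => by rw [div_eq_mul_inv]
  simp_rw [this]
  rw [intervalIntegral.integral_const_mul, integral_inv h0, Real.log_div hv.ne' hu.ne']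

lemma inner_int {a : ℝ} (ha : a ∈ Set.Ioc (0:ℝ) 1) :
    ∫ b in Set.Ioc (0:ℝ) 1, min ((1 - a) / b) ((1 - b) / a) = gfun a := by
  obtain ⟨ha0, ha1⟩ := ha
  by_cases hhalf : a ≤ 1/2
  · -- split at a and 1-a
    have h1a : a ≤ 1 - a := by linarith
    have h1a1 : 1 - a ≤ 1 := by linarith
    -- pointwise identities
    have e1 : Set.EqOn (fun b => (1-b)/a) (fun b => min ((1 - a) / b) ((1 - b) / a))
        (Set.Ioc 0 a) := by
      intro b hb
      have hb0 : 0 < b := hb.1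
      have hba : b ≤ a := hb.2
      have : (1-b)/a ≤ (1-a)/b := by
        rw [div_le_div_iff₀ ha0 hb0]
        nlinarith
      exact (min_eq_right this).symm
    have e2 : Set.EqOn (fun b => (1-a)/b) (fun b => min ((1 - a) / b) ((1 - b) / a))
        (Set.Ioc a (1-a)) := by
      intro b hb
      have hb0 : 0 < b := lt_trans ha0 hb.1
      have : (1-a)/b ≤ (1-b)/a := by
        rw [div_le_div_iff₀ hb0 ha0]
        nlinarith [hb.1.le, hb.2]
      exact (min_eq_left this).symm
    have e3 : Set.EqOn (fun b => (1-b)/a) (fun b => min ((1 - a) / b) ((1 - b) / a))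
        (Set.Ioc (1-a) 1) := by
      intro b hb
      have hb0 : 0 < b := lt_of_le_of_lt (by linarith : (0:ℝ) ≤ 1 - a) hb.1
      have : (1-b)/a ≤ (1-a)/b := by
        rw [div_le_div_iff₀ ha0 hb0]
        nlinarith [hb.1, hb.2]
      exact (min_eq_right this).symm
    -- integrabilities
    have c1 : Continuous fun b : ℝ => (1-b)/a :=
      (continuous_const.sub continuous_id).div_const a
    have I1 : IntegrableOn (fun b => min ((1 - a) / b) ((1 - b) / a)) (Set.Ioc 0 a) volume :=
      (c1.integrableOn_Ioc).congr_fun e1 measurableSet_Ioc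
    have I2 : IntegrableOn (fun b => min ((1 - a) / b) ((1 - b) / a)) (Set.Ioc a (1-a)) volume := by
      refine (IntegrableOn.congr_fun ?_ e2 measurableSet_Ioc)
      refine (ContinuousOn.integrableOn_Icc ?_).mono_set Set.Ioc_subset_Icc_self
      exact continuousOn_const.div continuousOn_id (fun x hx => ne_of_gt (lt_of_lt_of_le ha0 hx.1))
    have I3 : IntegrableOn (fun b => min ((1 - a) / b) ((1 - b) / a)) (Set.Ioc (1-a) 1) volume :=
      (c1.integrableOn_Ioc).congr_fun e3 measurableSet_Ioc
    rw [show Set.Ioc (0:ℝ) 1 = Set.Ioc 0 a ∪ Set.Ioc a 1 from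
        (Set.Ioc_union_Ioc_eq_Ioc ha0.le ha1).symm,
      setIntegral_union (Set.Ioc_disjoint_Ioc_of_le le_rfl) measurableSet_Ioc I1
        (by rw [show Set.Ioc a (1:ℝ) = Set.Ioc a (1-a) ∪ Set.Ioc (1-a) 1 from
              (Set.Ioc_union_Ioc_eq_Ioc h1a h1a1).symm]
            exact I2.union I3),
      show Set.Ioc a (1:ℝ) = Set.Ioc a (1-a) ∪ Set.Ioc (1-a) 1 from
        (Set.Ioc_union_Ioc_eq_Ioc h1a h1a1).symm,
      setIntegral_union (Set.Ioc_disjoint_Ioc_of_le le_rfl) measurableSet_Ioc I2 I3,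
      ← setIntegral_congr_fun measurableSet_Ioc e1,
      ← setIntegral_congr_fun measurableSet_Ioc e2,
      ← setIntegral_congr_fun measurableSet_Ioc e3,
      piece1 ha0.le (ne_of_gt ha0), piece2 ha0 h1a, piece1 h1a1 (ne_of_gt ha0)]
    rw [gfun, if_pos hhalf]
    field_simp
    ring
  · push_neg at hhalf
    by_cases hae : a = 1
    · subst hae
      have e0 : Set.EqOn (fun _ : ℝ => (0:ℝ))
          (fun b => min ((1 - 1) / b) ((1 - b) / 1)) (Set.Ioc 0 1) := by
        intro b hb
        have : ((1:ℝ) - 1)/b = 0 := by norm_num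
        simp only [this]
        exact (min_eq_left (by simp; linarith [hb.2])).symm
      rw [← setIntegral_congr_fun measurableSet_Ioc e0, gfun, if_neg (by norm_num)]
      simp
    · have ha1' : a < 1 := lt_of_le_of_ne ha1 hae
      have h0a : 0 < 1 - a := by linarith
      have haa : 1 - a ≤ a := by linarith
      have e1 : Set.EqOn (fun b => (1-b)/a) (fun b => min ((1 - a) / b) ((1 - b) / a))
          (Set.Ioc 0 (1-a)) := by
        intro b hb
        have hb0 : 0 < b := hb.1
        have : (1-b)/a ≤ (1-a)/b := by
          rw [div_le_div_iff₀ ha0 hb0]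
          nlinarith [hb.2]
        exact (min_eq_right this).symm
      have e2 : Set.EqOn (fun b => (1-a)/b) (fun b => min ((1 - a) / b) ((1 - b) / a))
          (Set.Ioc (1-a) a) := by
        intro b hb
        have hb0 : 0 < b := lt_trans h0a hb.1
        have : (1-a)/b ≤ (1-b)/a := by
          rw [div_le_div_iff₀ hb0 ha0]
          nlinarith [hb.1, hb.2]
        exact (min_eq_left this).symm
      have e3 : Set.EqOn (fun b => (1-b)/a) (fun b => min ((1 - a) / b) ((1 - b) / a))
          (Set.Ioc a 1) := by
        intro b hb
        have hb0 : 0 < b := lt_trans ha0 hb.1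
        have : (1-b)/a ≤ (1-a)/b := by
          rw [div_le_div_iff₀ ha0 hb0]
          nlinarith [hb.1, hb.2]
        exact (min_eq_right this).symm
      have c1 : Continuous fun b : ℝ => (1-b)/a :=
        (continuous_const.sub continuous_id).div_const a
      have I1 : IntegrableOn (fun b => min ((1 - a) / b) ((1 - b) / a))
          (Set.Ioc 0 (1-a)) volume :=
        (c1.integrableOn_Ioc).congr_fun e1 measurableSet_Ioc
      have I2 : IntegrableOn (fun b => min ((1 - a) / b) ((1 - b) / a))
          (Set.Ioc (1-a) a) volume := by
        refine (IntegrableOn.congr_fun ?_ e2 measurableSet_Ioc)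
        refine (ContinuousOn.integrableOn_Icc ?_).mono_set Set.Ioc_subset_Icc_self
        exact continuousOn_const.div continuousOn_id
          (fun x hx => ne_of_gt (lt_of_lt_of_le h0a hx.1))
      have I3 : IntegrableOn (fun b => min ((1 - a) / b) ((1 - b) / a)) (Set.Ioc a 1) volume :=
        (c1.integrableOn_Ioc).congr_fun e3 measurableSet_Ioc
      rw [show Set.Ioc (0:ℝ) 1 = Set.Ioc 0 (1-a) ∪ Set.Ioc (1-a) 1 from
          (Set.Ioc_union_Ioc_eq_Ioc h0a.le (by linarith)).symm,
        setIntegral_union (Set.Ioc_disjoint_Ioc_of_le le_rfl) measurableSet_Ioc I1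
          (by rw [show Set.Ioc (1-a) (1:ℝ) = Set.Ioc (1-a) a ∪ Set.Ioc a 1 from
                (Set.Ioc_union_Ioc_eq_Ioc haa ha1).symm]
              exact I2.union I3),
        show Set.Ioc (1-a) (1:ℝ) = Set.Ioc (1-a) a ∪ Set.Ioc a 1 from
          (Set.Ioc_union_Ioc_eq_Ioc haa ha1).symm,
        setIntegral_union (Set.Ioc_disjoint_Ioc_of_le le_rfl) measurableSet_Ioc I2 I3,
        ← setIntegral_congr_fun measurableSet_Ioc e1,
        ← setIntegral_congr_fun measurableSet_Ioc e2,
        ← setIntegral_congr_fun measurableSet_Ioc e3,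
        piece1 h0a.le (ne_of_gt ha0), piece2 h0a haa, piece1 ha1 (ne_of_gt ha0)]
      rw [gfun, if_neg (not_le.2 hhalf)]
      field_simp
      ring

lemma hl2 : Real.log (1/2) = -Real.log 2 := by rw [one_div, Real.log_inv]

lemma A1 : ∫ x in (0:ℝ)..(1/2), (1-x)*Real.log (1-x) = Real.log 2 / 8 - 3/16 := by
  have e : ∫ x in (0:ℝ)..(1/2), (1-x)*Real.log (1-x)
      = ∫ x in (1-(1/2:ℝ))..(1-(0:ℝ)), x * Real.log x :=
    integral_comp_sub_left (fun t => t * Real.log t) 1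
  norm_num at e
  rw [e, integral_mul_log01 (by norm_num) (by norm_num), hl2]
  norm_num
  ring

lemma A2 : ∫ x in (0:ℝ)..(1/2), x*Real.log x = -(Real.log 2)/8 - 1/16 := by
  rw [integral_mul_log01 le_rfl (by norm_num), hl2]
  norm_num
  ring

lemma A3 : ∫ x in (0:ℝ)..(1/2), Real.log x = -(Real.log 2)/2 - 1/2 := by
  rw [integral_log01 le_rfl (by norm_num) (by norm_num), hl2]
  norm_num
  ring

lemma A4 : ∫ x in (1/2:ℝ)..1, Real.log x = Real.log 2/2 - 1/2 := by
  rw [integral_log01 (by norm_num) (by norm_num) le_rfl, hl2]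
  norm_num
  ring

lemma A5 : ∫ x in (1/2:ℝ)..1, x*Real.log x = Real.log 2/8 - 3/16 := by
  rw [integral_mul_log01 (by norm_num) (by norm_num), hl2]
  norm_num
  ring

lemma A6 : ∫ x in (1/2:ℝ)..1, (1-x)*Real.log (1-x) = -(Real.log 2)/8 - 1/16 := by
  have e : ∫ x in (1/2:ℝ)..1, (1-x)*Real.log (1-x)
      = ∫ x in (1-(1:ℝ))..(1-(1/2:ℝ)), x * Real.log x :=
    integral_comp_sub_left (fun t => t * Real.log t) 1
  norm_num at e
  rw [e, integral_mul_log01 le_rfl (by norm_num), hl2]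
  norm_num
  ring

lemma A7 : ∫ x in (1/2:ℝ)..1, (1-x)/x = Real.log 2 - 1/2 := by
  have hne : ∀ x ∈ Set.uIcc (1/2:ℝ) 1, x ≠ 0 := by
    rw [Set.uIcc_of_le (by norm_num)]
    intro x hx h
    rw [h] at hx
    exact absurd hx.1 (by norm_num)
  have e : Set.EqOn (fun x : ℝ => (1-x)/x) (fun x : ℝ => 1/x - 1) (Set.uIcc (1/2:ℝ) 1) := by
    intro x hx
    have := hne x hx
    field_simp
  have h0 : (0:ℝ) ∉ Set.uIcc (1/2:ℝ) 1 := fun h => hne 0 h rfl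
  have hint : IntervalIntegrable (fun x : ℝ => 1/x) volume (1/2) 1 :=
    ContinuousOn.intervalIntegrable (continuousOn_const.div continuousOn_id hne)
  rw [integral_congr e, intervalIntegral.integral_sub hint intervalIntegrable_const,
    integral_one_div h0, intervalIntegral.integral_const]
  norm_num

lemma cont_oml : Continuous fun a : ℝ => (1-a)*Real.log (1-a) :=
  Real.continuous_mul_log.comp (continuous_const.sub continuous_id)

lemma outer_int : ∫ a in Set.Ioc (0:ℝ) 1, gfun a = 2 * Real.log 2 := by
  have hE1 : Set.EqOn gfun
      (fun a => (1 + (1-a)*Real.log (1-a) + a * Real.log a) - Real.log a)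
      (Set.Ioc 0 (1/2)) := by
    intro a ha
    rw [gfun, if_pos ha.2]
    ring
  have hE2 : Set.EqOn gfun
      (fun a => ((1-a)/a + Real.log a - a*Real.log a) - (1-a)*Real.log (1-a))
      (Set.Ioc (1/2) 1) := by
    intro a ha
    rw [gfun, if_neg (not_le.2 ha.1)]
    field_simp
    ring
  have Rcont : Continuous fun a : ℝ => 1 + (1-a)*Real.log (1-a) + a * Real.log a :=
    (continuous_const.add cont_oml).add Real.continuous_mul_log
  have hlogI : IntervalIntegrable Real.log volume 0 (1/2) :=
    log_intInt.mono_set (by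
      rw [Set.uIcc_of_le (by norm_num : (0:ℝ) ≤ 1/2), Set.uIcc_of_le zero_le_one]
      exact Set.Icc_subset_Icc le_rfl (by norm_num))
  have Ip : IntegrableOn
      (fun a => (1 + (1-a)*Real.log (1-a) + a * Real.log a) - Real.log a)
      (Set.Ioc 0 (1/2)) volume :=
    Rcont.integrableOn_Ioc.sub hlogI.1
  have Scont : ContinuousOn (fun a : ℝ => (1-a)/a + Real.log a - a*Real.log a)
      (Set.Icc (1/2:ℝ) 1) := by
    have hne : ∀ x ∈ Set.Icc (1/2:ℝ) 1, x ≠ 0 := by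
      intro x hx h
      have := hx.1; rw [h] at this; norm_num at this
    exact ((((continuous_const.sub continuous_id).continuousOn.div continuousOn_id hne).add
      (Real.continuousOn_log.mono (fun x hx => hne x hx))).sub
      Real.continuous_mul_log.continuousOn)
  have Qcont : ContinuousOn
      (fun a : ℝ => ((1-a)/a + Real.log a - a*Real.log a) - (1-a)*Real.log (1-a))
      (Set.Icc (1/2:ℝ) 1) := Scont.sub cont_oml.continuousOn
  have Iq : IntegrableOn
      (fun a => ((1-a)/a + Real.log a - a*Real.log a) - (1-a)*Real.log (1-a))
      (Set.Ioc (1/2:ℝ) 1) volume :=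
    Qcont.integrableOn_Icc.mono_set Set.Ioc_subset_Icc_self
  rw [show Set.Ioc (0:ℝ) 1 = Set.Ioc 0 (1/2) ∪ Set.Ioc (1/2) 1 from
      (Set.Ioc_union_Ioc_eq_Ioc (by norm_num) (by norm_num)).symm,
    setIntegral_union (Set.Ioc_disjoint_Ioc_of_le le_rfl) measurableSet_Ioc
      (Ip.congr_fun hE1.symm measurableSet_Ioc) (Iq.congr_fun hE2.symm measurableSet_Ioc),
    setIntegral_congr_fun measurableSet_Ioc hE1,
    setIntegral_congr_fun measurableSet_Ioc hE2,
    ← intervalIntegral.integral_of_le (by norm_num : (0:ℝ) ≤ 1/2),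
    ← intervalIntegral.integral_of_le (by norm_num : (1/2:ℝ) ≤ 1)]
  rw [intervalIntegral.integral_sub (Rcont.intervalIntegrable _ _) hlogI,
    intervalIntegral.integral_add (f := fun a => 1 + (1-a)*Real.log (1-a))
      (g := fun a => a * Real.log a) ((continuous_const.add cont_oml).intervalIntegrable _ _)
      (Real.continuous_mul_log.intervalIntegrable _ _),
    intervalIntegral.integral_add (f := fun _ => (1:ℝ)) (g := fun a => (1-a)*Real.log (1-a))
      (continuous_const.intervalIntegrable _ _)
      (cont_oml.intervalIntegrable _ _),
    intervalIntegral.integral_const]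
  have SiI : IntervalIntegrable (fun a : ℝ => (1-a)/a + Real.log a - a*Real.log a)
      volume (1/2) 1 := by
    apply ContinuousOn.intervalIntegrable
    rw [Set.uIcc_of_le (by norm_num)]
    exact Scont
  rw [intervalIntegral.integral_sub SiI (cont_oml.intervalIntegrable _ _)]
  have SiI2 : IntervalIntegrable (fun a : ℝ => (1-a)/a + Real.log a)
      volume (1/2) 1 := by
    apply ContinuousOn.intervalIntegrable
    rw [Set.uIcc_of_le (by norm_num)]
    have hne : ∀ x ∈ Set.Icc (1/2:ℝ) 1, x ≠ 0 := by
      intro x hx h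
      have := hx.1; rw [h] at this; norm_num at this
    exact (((continuous_const.sub continuous_id).continuousOn.div continuousOn_id hne).add
      (Real.continuousOn_log.mono (fun x hx => hne x hx)))
  rw [intervalIntegral.integral_sub SiI2 (Real.continuous_mul_log.intervalIntegrable _ _)]
  have SiI3 : IntervalIntegrable (fun a : ℝ => (1-a)/a) volume (1/2) 1 := by
    apply ContinuousOn.intervalIntegrable
    rw [Set.uIcc_of_le (by norm_num)]
    have hne : ∀ x ∈ Set.Icc (1/2:ℝ) 1, x ≠ 0 := by
      intro x hx h
      have := hx.1; rw [h] at this; norm_num at this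
    exact ((continuous_const.sub continuous_id).continuousOn.div continuousOn_id hne)
  have logI2 : IntervalIntegrable Real.log volume (1/2) 1 :=
    log_intInt.mono_set (by
      rw [Set.uIcc_of_le (by norm_num : (1/2:ℝ) ≤ 1), Set.uIcc_of_le zero_le_one]
      exact Set.Icc_subset_Icc (by norm_num) le_rfl)
  rw [intervalIntegral.integral_add SiI3 logI2, A1, A2, A3, A4, A5, A6, A7]
  norm_num
  ring

theorem integral_C :
    ∫ a in Set.Ioc (0:ℝ) 1, ∫ b in Set.Ioc (0:ℝ) 1,
        min ((1 - a) / b) ((1 - b) / a)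
      = 2 * Real.log 2 := by
  rw [setIntegral_congr_fun measurableSet_Ioc (fun a ha => inner_int ha)]
  exact outer_int
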